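/- Let (T, Γ) be a Γ-semigroup, H a Γ-two-sided ideal of T, and Q a Γ-prime ideal of T with H ∩ Q nonempty. Then H ∩ Q is a Γ-prime ideal of the Γ-semigroup H: it is a Γ-two-sided ideal of H, and for all Γ-two-sided ideals E, F of H, EΓF ⊆ H ∩ Q implies E ⊆ H ∩ Q or F ⊆ H ∩ Q. -/
import Mathlib


/-- The set product AΓB = {aγb : a ∈ A, γ ∈ Γ, b ∈ B} for a Γ-semigroup
with multiplication `mul : T → G → T → T`. -/
def gprod {T G : Type*} (mul : T → G → T → T) (A B : Set T) : Set T :=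
  {x | ∃ a ∈ A, ∃ γ : G, ∃ b ∈ B, x = mul a γ b}

/-- A nonempty subset B with TΓB ⊆ B. -/
def IsLeftIdeal {T G : Type*} (mul : T → G → T → T) (B : Set T) : Prop :=
  B.Nonempty ∧ gprod mul Set.univ B ⊆ B

/-- A nonempty subset B with BΓT ⊆ B. -/
def IsRightIdeal {T G : Type*} (mul : T → G → T → T) (B : Set T) : Prop :=
  B.Nonempty ∧ gprod mul B Set.univ ⊆ B

/-- A Γ-two-sided ideal. -/
def IsTwoSidedIdeal {T G : Type*} (mul : T → G → T → T) (B : Set T) : Prop :=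
  IsLeftIdeal mul B ∧ IsRightIdeal mul B

/-- z is a zero element: eαz = zαe = z for all e, α. -/
def IsZero {T G : Type*} (mul : T → G → T → T) (z : T) : Prop :=
  ∀ (e : T) (α : G), mul e α z = z ∧ mul z α e = z

/-- A least Γ-left ideal: every Γ-left ideal contained in it equals it. -/
def IsLeastLeftIdeal {T G : Type*} (mul : T → G → T → T) (H : Set T) : Prop :=
  IsLeftIdeal mul H ∧ ∀ B : Set T, IsLeftIdeal mul B → B ⊆ H → B = H

/-- A least Γ-two-sided ideal. -/
def IsLeastTwoSidedIdeal {T G : Type*} (mul : T → G → T → T) (A : Set T) : Prop :=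
  IsTwoSidedIdeal mul A ∧ ∀ B : Set T, IsTwoSidedIdeal mul B → B ⊆ A → B = A

/-- A 0-least Γ-left ideal. -/
def IsZeroLeastLeftIdeal {T G : Type*} (mul : T → G → T → T) (z : T) (H : Set T) : Prop :=
  IsLeftIdeal mul H ∧ H ≠ {z} ∧
    ∀ B : Set T, IsLeftIdeal mul B → B ⊆ H → B = {z} ∨ B = H

/-- A 0-least Γ-right ideal. -/
def IsZeroLeastRightIdeal {T G : Type*} (mul : T → G → T → T) (z : T) (H : Set T) : Prop :=
  IsRightIdeal mul H ∧ H ≠ {z} ∧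
    ∀ B : Set T, IsRightIdeal mul B → B ⊆ H → B = {z} ∨ B = H

/-- A 0-least Γ-two-sided ideal. -/
def IsZeroLeastTwoSidedIdeal {T G : Type*} (mul : T → G → T → T) (z : T) (H : Set T) : Prop :=
  IsTwoSidedIdeal mul H ∧ H ≠ {z} ∧
    ∀ B : Set T, IsTwoSidedIdeal mul B → B ⊆ H → B = {z} ∨ B = H

/-- 0-simple: TΓT ≠ {0} and the only Γ-two-sided ideals are {0} and T. -/
def IsZeroSimple {T G : Type*} (mul : T → G → T → T) (z : T) : Prop :=
  gprod mul Set.univ Set.univ ≠ {z} ∧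
    ∀ B : Set T, IsTwoSidedIdeal mul B → B = {z} ∨ B = Set.univ

/-- e is an idempotent: eαe = e for some α. -/
def IsIdempotent {T G : Type*} (mul : T → G → T → T) (e : T) : Prop :=
  ∃ α : G, mul e α e = e

/-- The partial order on idempotents: e ≤ f iff exf = fye = e for some x, y ∈ Γ. -/
def IdemLe {T G : Type*} (mul : T → G → T → T) (e f : T) : Prop :=
  ∃ x y : G, mul e x f = e ∧ mul f y e = e

/-- A primitive idempotent: nonzero, and minimal among nonzero idempotents. -/
def IsPrimitiveIdempotent {T G : Type*} (mul : T → G → T → T) (z e : T) : Prop :=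
  e ≠ z ∧ IsIdempotent mul e ∧
    ∀ f : T, f ≠ z → IsIdempotent mul f → IdemLe mul f e → f = e

/-- Completely 0-simple: 0-simple with a primitive idempotent. -/
def IsCompletelyZeroSimple {T G : Type*} (mul : T → G → T → T) (z : T) : Prop :=
  IsZeroSimple mul z ∧ ∃ e : T, IsPrimitiveIdempotent mul z e

/-- Green's relation L: e L f iff {e} ∪ TΓe = {f} ∪ TΓf. -/
def LRel {T G : Type*} (mul : T → G → T → T) (e f : T) : Prop :=
  insert e (gprod mul Set.univ {e}) = insert f (gprod mul Set.univ {f})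

/-- Green's relation R: e R f iff {e} ∪ eΓT = {f} ∪ fΓT. -/
def RRel {T G : Type*} (mul : T → G → T → T) (e f : T) : Prop :=
  insert e (gprod mul {e} Set.univ) = insert f (gprod mul {f} Set.univ)

/-- Green's relation D = L ∘ R. -/
def DRel {T G : Type*} (mul : T → G → T → T) (e f : T) : Prop :=
  ∃ c : T, LRel mul e c ∧ RRel mul c f

/-- The Γ-two-sided ideal generated by e: {e} ∪ TΓe ∪ eΓT ∪ TΓeΓT. -/
def GenTwo {T G : Type*} (mul : T → G → T → T) (e : T) : Set T :=
  {e} ∪ gprod mul Set.univ {e} ∪ gprod mul {e} Set.univ ∪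
    gprod mul (gprod mul Set.univ {e}) Set.univ

/-- A Γ-prime ideal. -/
def IsPrimeIdeal {T G : Type*} (mul : T → G → T → T) (Q : Set T) : Prop :=
  IsTwoSidedIdeal mul Q ∧
    ∀ E F : Set T, IsTwoSidedIdeal mul E → IsTwoSidedIdeal mul F →
      gprod mul E F ⊆ Q → E ⊆ Q ∨ F ⊆ Q

/-- A Γ-two-sided ideal of the Γ-semigroup H (a subset of T closed as an ideal of H). -/
def IsTwoSidedIdealIn {T G : Type*} (mul : T → G → T → T) (H B : Set T) : Prop :=
  B.Nonempty ∧ B ⊆ H ∧ gprod mul H B ⊆ B ∧ gprod mul B H ⊆ B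

section AuxPrime

variable {T G : Type*} {mul : T → G → T → T}

lemma mem_gprod' {A B : Set T} {a b : T} (ha : a ∈ A) (γ : G) (hb : b ∈ B) :
    mul a γ b ∈ gprod mul A B := ⟨a, ha, γ, b, hb, rfl⟩

lemma mem_genTwo_self (c : T) : c ∈ GenTwo mul c := by
  left; left; left; rfl

lemma genTwo_left
    (assoc : ∀ (e f g : T) (α β : G), mul (mul e α f) β g = mul e α (mul f β g))
    (c : T) (s : T) (γ : G) {v : T} (hv : v ∈ GenTwo mul c) :
    mul s γ v ∈ GenTwo mul c := by
  rcases hv with ((hv | hv) | hv) | hv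
  · rw [Set.mem_singleton_iff] at hv; subst hv
    exact Or.inl (Or.inl (Or.inr (mem_gprod' (Set.mem_univ _) γ (Set.mem_singleton _))))
  · obtain ⟨t, -, α, c', hc', rfl⟩ := hv
    rw [Set.mem_singleton_iff] at hc'; subst hc'
    rw [← assoc]
    exact Or.inl (Or.inl (Or.inr (mem_gprod' (Set.mem_univ _) α (Set.mem_singleton _))))
  · obtain ⟨c', hc', α, t, -, rfl⟩ := hv
    rw [Set.mem_singleton_iff] at hc'; subst hc'
    rw [← assoc]
    exact Or.inr (mem_gprod' (mem_gprod' (Set.mem_univ _) γ (Set.mem_singleton _)) α (Set.mem_univ _))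
  · obtain ⟨w, hw, α, t', -, rfl⟩ := hv
    obtain ⟨t, -, β, c', hc', rfl⟩ := hw
    rw [Set.mem_singleton_iff] at hc'; subst hc'
    rw [← assoc, ← assoc]
    exact Or.inr (mem_gprod' (mem_gprod' (Set.mem_univ _) β (Set.mem_singleton _)) α (Set.mem_univ _))

lemma genTwo_right
    (assoc : ∀ (e f g : T) (α β : G), mul (mul e α f) β g = mul e α (mul f β g))
    (c : T) {v : T} (hv : v ∈ GenTwo mul c) (γ : G) (s : T) :
    mul v γ s ∈ GenTwo mul c := by
  rcases hv with ((hv | hv) | hv) | hv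
  · rw [Set.mem_singleton_iff] at hv; subst hv
    exact Or.inl (Or.inr (mem_gprod' (Set.mem_singleton _) γ (Set.mem_univ _)))
  · obtain ⟨t, -, α, c', hc', rfl⟩ := hv
    rw [Set.mem_singleton_iff] at hc'; subst hc'
    exact Or.inr (mem_gprod' (mem_gprod' (Set.mem_univ _) α (Set.mem_singleton _)) γ (Set.mem_univ _))
  · obtain ⟨c', hc', α, t, -, rfl⟩ := hv
    rw [Set.mem_singleton_iff] at hc'; subst hc'
    rw [assoc]
    exact Or.inl (Or.inr (mem_gprod' (Set.mem_singleton _) α (Set.mem_univ _)))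
  · obtain ⟨w, hw, α, t', -, rfl⟩ := hv
    obtain ⟨t, -, β, c', hc', rfl⟩ := hw
    rw [Set.mem_singleton_iff] at hc'; subst hc'
    rw [assoc (mul t β c')]
    exact Or.inr (mem_gprod' (mem_gprod' (Set.mem_univ _) β (Set.mem_singleton _)) α (Set.mem_univ _))

lemma genTwo_isIdeal
    (assoc : ∀ (e f g : T) (α β : G), mul (mul e α f) β g = mul e α (mul f β g))
    (c : T) : IsTwoSidedIdeal mul (GenTwo mul c) := by
  refine ⟨⟨⟨c, mem_genTwo_self c⟩, ?_⟩, ⟨⟨c, mem_genTwo_self c⟩, ?_⟩⟩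
  · rintro x ⟨s, -, γ, v, hv, rfl⟩
    exact genTwo_left assoc c s γ hv
  · rintro x ⟨v, hv, γ, s, -, rfl⟩
    exact genTwo_right assoc c hv γ s

lemma elem_prime [Nonempty T] [Nonempty G]
    (assoc : ∀ (e f g : T) (α β : G), mul (mul e α f) β g = mul e α (mul f β g))
    {Q : Set T} (hQ : IsPrimeIdeal mul Q) (a b : T)
    (hab : ∀ γ : G, mul a γ b ∈ Q)
    (hatb : ∀ (γ : G) (t : T) (δ : G), mul (mul a γ t) δ b ∈ Q) :
    a ∈ Q ∨ b ∈ Q := by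
  obtain ⟨⟨⟨-, Ql⟩, ⟨-, Qr⟩⟩, hpr⟩ := hQ
  have hQl : ∀ (t : T) (γ : G) (q : T), q ∈ Q → mul t γ q ∈ Q := fun t γ q hq =>
    Ql (mem_gprod' (Set.mem_univ _) γ hq)
  have hQr : ∀ (q : T), q ∈ Q → ∀ (γ : G) (t : T), mul q γ t ∈ Q := fun q hq γ t =>
    Qr (mem_gprod' hq γ (Set.mem_univ _))
  -- a Γ (GenTwo b) ⊆ Q
  have L1 : ∀ (γ : G) (v : T), v ∈ GenTwo mul b → mul a γ v ∈ Q := by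
    intro γ v hv
    rcases hv with ((hv | hv) | hv) | hv
    · rw [Set.mem_singleton_iff] at hv; subst hv; exact hab γ
    · obtain ⟨t, -, α, b', hb', rfl⟩ := hv
      rw [Set.mem_singleton_iff] at hb'; subst hb'
      rw [← assoc]; exact hatb γ t α
    · obtain ⟨b', hb', α, t, -, rfl⟩ := hv
      rw [Set.mem_singleton_iff] at hb'; subst hb'
      rw [← assoc]; exact hQr _ (hab γ) α t
    · obtain ⟨w, hw, α, t', -, rfl⟩ := hv
      obtain ⟨t, -, β, b', hb', rfl⟩ := hw
      rw [Set.mem_singleton_iff] at hb'; subst hb'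
      rw [← assoc, ← assoc]
      exact hQr _ (hatb γ t β) α t'
  have hsub : gprod mul (GenTwo mul a) (GenTwo mul b) ⊆ Q := by
    rintro x ⟨u, hu, γ, v, hv, rfl⟩
    rcases hu with ((hu | hu) | hu) | hu
    · rw [Set.mem_singleton_iff] at hu; subst hu; exact L1 γ v hv
    · obtain ⟨t, -, α, a', ha', rfl⟩ := hu
      rw [Set.mem_singleton_iff] at ha'; subst ha'
      rw [assoc]; exact hQl t α _ (L1 γ v hv)
    · obtain ⟨a', ha', α, t, -, rfl⟩ := hu
      rw [Set.mem_singleton_iff] at ha'; subst ha'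
      rw [assoc]
      exact L1 α _ (genTwo_left assoc b t γ hv)
    · obtain ⟨w, hw, α, t', -, rfl⟩ := hu
      obtain ⟨t, -, β, a', ha', rfl⟩ := hw
      rw [Set.mem_singleton_iff] at ha'; subst ha'
      rw [assoc, assoc]
      exact hQl t β _ (L1 α _ (genTwo_left assoc b t' γ hv))
  rcases hpr _ _ (genTwo_isIdeal assoc a) (genTwo_isIdeal assoc b) hsub with h | h
  · exact Or.inl (h (mem_genTwo_self a))
  · exact Or.inr (h (mem_genTwo_self b))

end AuxPrime

theorem inter_with_prime_is_prime_in_H {T G : Type*} [Nonempty T] [Nonempty G]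
    (mul : T → G → T → T)
    (assoc : ∀ (e f g : T) (α β : G), mul (mul e α f) β g = mul e α (mul f β g))
    (H : Set T) (hH : IsTwoSidedIdeal mul H)
    (Q : Set T) (hQ : IsPrimeIdeal mul Q)
    (hne : (H ∩ Q).Nonempty) :
    IsTwoSidedIdealIn mul H (H ∩ Q) ∧
      ∀ E F : Set T, IsTwoSidedIdealIn mul H E → IsTwoSidedIdealIn mul H F →
        gprod mul E F ⊆ H ∩ Q → E ⊆ H ∩ Q ∨ F ⊆ H ∩ Q := by
  obtain ⟨⟨-, Hl⟩, ⟨-, Hr⟩⟩ := hH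
  have hHl : ∀ (t : T) (γ : G) (h : T), h ∈ H → mul t γ h ∈ H := fun t γ h hh =>
    Hl (mem_gprod' (Set.mem_univ _) γ hh)
  have hHr : ∀ (h : T), h ∈ H → ∀ (γ : G) (t : T), mul h γ t ∈ H := fun h hh γ t =>
    Hr (mem_gprod' hh γ (Set.mem_univ _))
  have hQid := hQ.1
  have hQl : ∀ (t : T) (γ : G) (q : T), q ∈ Q → mul t γ q ∈ Q := fun t γ q hq =>
    hQid.1.2 (mem_gprod' (Set.mem_univ _) γ hq)
  have hQr : ∀ (q : T), q ∈ Q → ∀ (γ : G) (t : T), mul q γ t ∈ Q := fun q hq γ t =>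
    hQid.2.2 (mem_gprod' hq γ (Set.mem_univ _))
  constructor
  · refine ⟨hne, Set.inter_subset_left, ?_, ?_⟩
    · rintro x ⟨h, hh, γ, v, ⟨hvH, hvQ⟩, rfl⟩
      exact ⟨hHl h γ v hvH, hQl h γ v hvQ⟩
    · rintro x ⟨v, ⟨hvH, hvQ⟩, γ, h, hh, rfl⟩
      exact ⟨hHr v hvH γ h, hQr v hvQ γ h⟩
  · intro E F hE hF hEF
    obtain ⟨hEne, hEH, hHE, hEHr⟩ := hE
    obtain ⟨hFne, hFH, hHF, hFHr⟩ := hF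
    by_cases hEQ : E ⊆ Q
    · exact Or.inl fun x hx => ⟨hEH hx, hEQ hx⟩
    · right
      obtain ⟨e₀, he₀E, he₀Q⟩ := Set.not_subset.mp hEQ
      intro f hf
      refine ⟨hFH hf, ?_⟩
      -- show f ∈ Q using element-primeness with e₀
      have key : ∀ (γ : G) (t : T) (δ : G), mul (mul e₀ γ t) δ f ∈ Q := by
        intro γ t δ
        set x := mul (mul e₀ γ t) δ f with hx
        have hxF : x ∈ F := hHF (mem_gprod' (hHr e₀ (hEH he₀E) γ t) δ hf)
        have := elem_prime assoc hQ e₀ x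
          (fun ε => (hEF (mem_gprod' he₀E ε hxF)).2)
          (by
            intro ε t' ζ
            rw [assoc]
            have ht'x : mul t' ζ x ∈ F := by
              rw [hx, ← assoc]
              exact hHF (mem_gprod' (hHl t' ζ _ (hHr e₀ (hEH he₀E) γ t)) δ hf)
            exact (hEF (mem_gprod' he₀E ε ht'x)).2)
        rcases this with h | h
        · exact absurd h he₀Q
        · exact h
      have := elem_prime assoc hQ e₀ f
        (fun γ => (hEF (mem_gprod' he₀E γ hf)).2) key
      rcases this with h | h
      · exact absurd h he₀Q
      · exact h
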